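/- arXiv:1011.6065 — 6 statements merged into one kernel-verified Lean document; each statement's English description precedes it below -/
import Mathlib

section
/- If X has E[X] = 0 and E[X²] = 1, and 0 < b ≤ a with (a-b)b/2 ≤ 1 ≤ ab, then P(X ∉ (-a, b)) ≤ (4 + (a-b)²)/(a+b)². -/
open MeasureTheory ProbabilityTheory
open scoped ProbabilityTheory

theorem case_two (Ω : Type*) [MeasureSpace Ω]
    (hP : IsProbabilityMeasure (ℙ : Measure Ω))
    (X : Ω → ℝ) (hX : Measurable X)
    (hint1 : Integrable X) (hint2 : Integrable (fun ω => X ω ^ 2))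
    (hmean : ∫ ω, X ω = 0) (hvar : ∫ ω, X ω ^ 2 = 1)
    (a b : ℝ) (hb : 0 < b) (hba : b ≤ a)
    (h1 : (a - b) * b / 2 ≤ 1) (h2 : 1 ≤ a * b) :
    ℙ {ω | X ω ∉ Set.Ioo (-a) b} ≤
      ENNReal.ofReal ((4 + (a - b) ^ 2) / (a + b) ^ 2) := by
  have hs : 0 < a + b := by linarith
  have hs2 : 0 < (a + b) ^ 2 := by positivity
  set f : Ω → ℝ := fun ω => (2 * X ω + (a - b)) ^ 2 / (a + b) ^ 2 with hf_def
  have i1 : Integrable (fun ω => 4 * X ω ^ 2) := hint2.const_mul 4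
  have i2 : Integrable (fun ω => 4 * (a - b) * X ω) := hint1.const_mul _
  have i3 : Integrable (fun ω => 4 * (a - b) * X ω + (a - b) ^ 2) := by
    exact i2.add (integrable_const _)
  have hgint : Integrable (fun ω => (2 * X ω + (a - b)) ^ 2) := by
    have h : Integrable (fun ω => 4 * X ω ^ 2 + (4 * (a - b) * X ω + (a - b) ^ 2)) := by
      exact i1.add i3
    refine h.congr (Filter.Eventually.of_forall fun ω => ?_)
    ring
  have hfint : Integrable f := hgint.div_const _
  have hfnn : 0 ≤ᵐ[ℙ] f := Filter.Eventually.of_forall fun ω => by positivity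
  have hfmeas : Measurable f := by
    apply Measurable.div_const
    exact ((hX.const_mul 2).add_const _).pow_const 2
  have hS : MeasurableSet {ω | X ω ∉ Set.Ioo (-a) b} :=
    (hX measurableSet_Ioo).compl
  have hintval : ∫ ω, f ω = (4 + (a - b) ^ 2) / (a + b) ^ 2 := by
    have e1 : ∫ ω, (2 * X ω + (a - b)) ^ 2 = 4 + (a - b) ^ 2 := by
      have heq : (fun ω => (2 * X ω + (a - b)) ^ 2)
          = fun ω => 4 * X ω ^ 2 + (4 * (a - b) * X ω + (a - b) ^ 2) := by
        ext ω; ring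
      rw [heq, integral_add i1 i3, integral_add i2 (integrable_const _),
        MeasureTheory.integral_const_mul, MeasureTheory.integral_const_mul, hmean, hvar, integral_const]
      simp
    calc ∫ ω, f ω = (∫ ω, (2 * X ω + (a - b)) ^ 2) / (a + b) ^ 2 := by
          rw [hf_def, integral_div]
      _ = (4 + (a - b) ^ 2) / (a + b) ^ 2 := by rw [e1]
  rw [← hintval]
  calc ℙ {ω | X ω ∉ Set.Ioo (-a) b}
      = ∫⁻ _ω in {ω | X ω ∉ Set.Ioo (-a) b}, 1 ∂ℙ := (setLIntegral_one _).symm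
    _ ≤ ∫⁻ ω in {ω | X ω ∉ Set.Ioo (-a) b}, ENNReal.ofReal (f ω) ∂ℙ := by
        refine setLIntegral_mono (hfmeas.ennreal_ofReal) fun ω hω => ?_
        simp only [Set.mem_setOf_eq, Set.mem_Ioo, not_and_or, not_lt] at hω
        have hx : (a + b) ^ 2 ≤ (2 * X ω + (a - b)) ^ 2 := by
          rcases hω with h | h
          · nlinarith
          · nlinarith
        rw [ENNReal.one_le_ofReal]
        rw [le_div_iff₀ hs2]
        linarith
    _ ≤ ∫⁻ ω, ENNReal.ofReal (f ω) ∂ℙ := setLIntegral_le_lintegral _ _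
    _ = ENNReal.ofReal (∫ ω, f ω) :=
        (ofReal_integral_eq_lintegral_ofReal hfint hfnn).symm
end

section
/- If X has E[X] = 0 and E[X²] = 1, and 0 < b ≤ a with (a-b)b/2 ≥ 1, then P(X ∉ (-a, b)) ≤ 1/(1+b²). -/
open MeasureTheory ProbabilityTheory
open scoped ProbabilityTheory

theorem case_three (Ω : Type*) [MeasureSpace Ω]
    (hP : IsProbabilityMeasure (ℙ : Measure Ω))
    (X : Ω → ℝ) (hX : Measurable X)
    (hint1 : Integrable X) (hint2 : Integrable (fun ω => X ω ^ 2))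
    (hmean : ∫ ω, X ω = 0) (hvar : ∫ ω, X ω ^ 2 = 1)
    (a b : ℝ) (hb : 0 < b) (hba : b ≤ a) (h1 : 1 ≤ (a - b) * b / 2) :
    ℙ {ω | X ω ∉ Set.Ioo (-a) b} ≤ ENNReal.ofReal (1 / (1 + b ^ 2)) := by
  obtain ⟨c, hc_def⟩ : ∃ c : ℝ, c = b + 1 / b := ⟨_, rfl⟩
  have hb0 : b ≠ 0 := ne_of_gt hb
  have hc : 0 < c := by rw [hc_def]; positivity
  have hc0 : c ≠ 0 := ne_of_gt hc
  set g : Ω → ℝ := fun ω => ((X ω + 1 / b) / c) ^ 2 with hg_def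
  set S : Set Ω := {ω | X ω ∉ Set.Ioo (-a) b} with hS_def
  have hS : MeasurableSet S := (hX measurableSet_Ioo).compl
  have hrw : g = fun ω => (1 / c ^ 2) * X ω ^ 2 + ((2 / (b * c ^ 2)) * X ω
      + 1 / (b ^ 2 * c ^ 2)) := by
    funext ω
    rw [hg_def]
    field_simp
    ring
  have i1 : Integrable (fun ω => (1 / c ^ 2) * X ω ^ 2) := hint2.const_mul _
  have i2 : Integrable (fun ω => (2 / (b * c ^ 2)) * X ω + 1 / (b ^ 2 * c ^ 2)) :=
    (hint1.const_mul _).add (integrable_const _)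
  have hgint : Integrable g := by rw [hrw]; exact i1.add i2
  have hgnn : 0 ≤ g := fun ω => sq_nonneg _
  have hInt : ∫ ω, g ω = 1 / (1 + b ^ 2) := by
    have h2 : ∫ ω, g ω = (1 / c ^ 2) * (∫ ω, X ω ^ 2) + ((2 / (b * c ^ 2)) * (∫ ω, X ω)
        + 1 / (b ^ 2 * c ^ 2)) := by
      simp only [hrw]
      rw [integral_add i1 i2, integral_add (hint1.const_mul _) (integrable_const _),
        integral_const_mul, integral_const_mul, integral_const]
      simp
    rw [h2, hvar, hmean, hc_def]
    have h3 : b * b + 1 ≠ 0 := by positivity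
    field_simp
    ring
  -- pointwise bound
  have hpt : ∀ ω ∈ S, (1 : ℝ) ≤ g ω := by
    intro ω hω
    have hxω : X ω ≤ -a ∨ b ≤ X ω := by
      simp only [hS_def, Set.mem_setOf_eq, Set.mem_Ioo, not_and_or, not_lt] at hω
      rcases hω with h | h
      · left; linarith
      · right; exact h
    have key : c ^ 2 ≤ (X ω + 1 / b) ^ 2 := by
      have hib : 0 < 1 / b := by positivity
      have ha2 : b + 2 / b ≤ a := by
        have h4 : 2 / b ≤ a - b := by rw [div_le_iff₀ hb]; linarith
        linarith
      rcases hxω with h | h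
      · have h5 : X ω + 1 / b ≤ -c := by
          have : 2 / b = 1 / b + 1 / b := by ring
          rw [hc_def]; linarith
        nlinarith
      · have h5 : c ≤ X ω + 1 / b := by rw [hc_def]; linarith
        nlinarith
    show (1 : ℝ) ≤ ((X ω + 1 / b) / c) ^ 2
    rw [div_pow, le_div_iff₀ (by positivity), one_mul]
    exact key
  calc ℙ S = ∫⁻ ω, S.indicator (fun _ => (1 : ENNReal)) ω ∂ℙ := by
        rw [lintegral_indicator hS, setLIntegral_one]
    _ ≤ ∫⁻ ω, ENNReal.ofReal (g ω) ∂ℙ := by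
        refine lintegral_mono fun ω => ?_
        by_cases hω : ω ∈ S
        · simp only [Set.indicator_of_mem hω]
          rw [show (1 : ENNReal) = ENNReal.ofReal 1 by simp]
          exact ENNReal.ofReal_le_ofReal (hpt ω hω)
        · simp [Set.indicator_of_notMem hω]
    _ = ENNReal.ofReal (∫ ω, g ω) := by
        rw [MeasureTheory.ofReal_integral_eq_lintegral_ofReal hgint
          (Filter.Eventually.of_forall hgnn)]
    _ = ENNReal.ofReal (1 / (1 + b ^ 2)) := by rw [hInt]
end

section
/- If X has E[X] = 0 and E[X²] = 1, and 0 < b ≤ a, then P(X ∉ (-a, b)) ≤ min(1, (4 + (a-b)²)/(a+b)²). -/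
open MeasureTheory ProbabilityTheory
open scoped ProbabilityTheory

theorem always_bound (Ω : Type*) [MeasureSpace Ω]
    (hP : IsProbabilityMeasure (ℙ : Measure Ω))
    (X : Ω → ℝ) (hX : Measurable X)
    (hint1 : Integrable X) (hint2 : Integrable (fun ω => X ω ^ 2))
    (hmean : ∫ ω, X ω = 0) (hvar : ∫ ω, X ω ^ 2 = 1)
    (a b : ℝ) (hb : 0 < b) (hba : b ≤ a) :
    ℙ {ω | X ω ∉ Set.Ioo (-a) b} ≤
      ENNReal.ofReal (min 1 ((4 + (a - b) ^ 2) / (a + b) ^ 2)) := by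
  set c : ℝ := (a - b) / 2 with hc
  set t : ℝ := (a + b) / 2 with ht
  have ht0 : 0 < t := by rw [ht]; linarith
  -- integrability of (X+c)^2
  have heq : (fun ω => (X ω + c) ^ 2) = fun ω => X ω ^ 2 + ((2 * c) * X ω + c ^ 2) := by
    funext ω; ring
  have hint3 : Integrable (fun ω => (X ω + c) ^ 2) := by
    rw [heq]
    exact hint2.add ((hint1.const_mul (2 * c)).add (integrable_const _))
  -- compute the integral
  have h1 : Integrable (fun ω => 2 * c * X ω + c ^ 2) := (hint1.const_mul (2 * c)).add (integrable_const _)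
  have hI : ∫ ω, (X ω + c) ^ 2 = 1 + c ^ 2 := by
    rw [heq]
    rw [integral_add hint2 h1]
    rw [integral_add (hint1.const_mul (2 * c)) (integrable_const _)]
    rw [integral_const_mul, hmean, hvar]
    simp
  -- the set equality
  have hset : {ω | X ω ∉ Set.Ioo (-a) b} = {ω | t ^ 2 ≤ (X ω + c) ^ 2} := by
    ext ω
    simp only [Set.mem_setOf_eq, Set.mem_Ioo, not_and, not_lt]
    constructor
    · intro h
      rcases le_or_gt (X ω) (-a) with h1 | h1
      · nlinarith
      · have := h h1; nlinarith
    · intro h h1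
      by_contra h2
      push_neg at h2
      nlinarith
  -- Markov
  have markov := mul_meas_ge_le_integral_of_nonneg
    (μ := (ℙ : Measure Ω)) (f := fun ω => (X ω + c) ^ 2)
    (Filter.Eventually.of_forall fun ω => sq_nonneg _) hint3 (t ^ 2)
  rw [hI] at markov
  have hfin : ℙ {ω | X ω ∉ Set.Ioo (-a) b} ≠ ⊤ := measure_ne_top _ _
  have hratio : (ℙ {ω | X ω ∉ Set.Ioo (-a) b}).toReal ≤ (4 + (a - b) ^ 2) / (a + b) ^ 2 := by
    rw [hset]
    have ht2 : (0:ℝ) < t ^ 2 := by positivity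
    have : (ℙ {ω | t ^ 2 ≤ (X ω + c) ^ 2}).toReal ≤ (1 + c ^ 2) / t ^ 2 := by
      rw [le_div_iff₀ ht2]; rw [measureReal_def] at markov; linarith [markov]
    refine this.trans ?_
    have hab2 : (0:ℝ) < (a + b) ^ 2 := by nlinarith
    rw [div_le_div_iff₀ ht2 hab2, hc, ht]
    ring_nf
    exact le_refl _
  rcases min_cases (1:ℝ) ((4 + (a - b) ^ 2) / (a + b) ^ 2) with ⟨h, _⟩ | ⟨h, _⟩ <;> rw [h]
  · simpa using prob_le_one
  · rw [← ENNReal.ofReal_toReal hfin]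
    exact ENNReal.ofReal_le_ofReal hratio
end

section
/- For reals 0 < b ≤ a with (a-b)b/2 ≥ 1, the indicator function g of ℝ \ (-a, b) satisfies g(x) ≤ ((bx+1)/(b²+1))² for all real x. -/
open MeasureTheory ProbabilityTheory
open scoped ProbabilityTheory

theorem indicator_le_cantelli_quadratic (a b : ℝ) (hb : 0 < b) (hba : b ≤ a)
    (h : 1 ≤ (a - b) * b / 2) (x : ℝ) :
    Set.indicator (Set.Ioo (-a) b)ᶜ (fun _ => (1 : ℝ)) x ≤
      ((b * x + 1) / (b ^ 2 + 1)) ^ 2 := by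
  by_cases hx : x ∈ (Set.Ioo (-a) b)ᶜ
  · rw [Set.indicator_of_mem hx]
    have hd : (0:ℝ) < b ^ 2 + 1 := by positivity
    have key : b ^ 2 + 1 ≤ |b * x + 1| := by
      have hx' : -a < x → b ≤ x := by simpa [Set.mem_Ioo] using hx
      by_cases h1 : -a < x
      · have h2 := hx' h1
        rw [abs_of_nonneg (by nlinarith)]
        nlinarith [mul_le_mul_of_nonneg_left h2 hb.le]
      · push_neg at h1
        have hbx : b * x ≤ -(b ^ 2 + 2) := by
          have := mul_le_mul_of_nonneg_left h1 hb.le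
          nlinarith
        rw [abs_of_nonpos (by nlinarith)]
        nlinarith
    have : (b ^ 2 + 1) ^ 2 ≤ (b * x + 1) ^ 2 := by
      calc (b ^ 2 + 1) ^ 2 ≤ |b * x + 1| ^ 2 := by nlinarith
        _ = (b * x + 1) ^ 2 := sq_abs _
    rw [div_pow, le_div_iff₀ (by positivity)]
    linarith
  · rw [Set.indicator_of_notMem hx]
    positivity
end

section
/- For reals 0 < b ≤ a with (a-b)b/2 ≤ 1 ≤ ab, the three-point distribution assigning probabilities (2-(a-b)b)/(a+b)², 4(ab-1)/(a+b)², and (2+(a-b)a)/(a+b)² to the points -a, (b-a)/2, and b respectively is a valid probability measure with mean 0 and second moment 1, and it assigns probability (4+(a-b)²)/(a+b)² to the set ℝ \ (-a, b). -/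
open MeasureTheory ProbabilityTheory
open scoped ProbabilityTheory

private lemma integrable_dirac'' {f : ℝ → ℝ} (hf : Measurable f) (p : ℝ) :
    Integrable f (Measure.dirac p) :=
  ⟨hf.aestronglyMeasurable, by
    rw [HasFiniteIntegral, lintegral_dirac]
    exact ENNReal.coe_lt_top⟩

theorem middle_case_exact (a b : ℝ) (hb : 0 < b) (hba : b ≤ a)
    (h1 : (a - b) * b / 2 ≤ 1) (h2 : 1 ≤ a * b) :
    let μ : Measure ℝ :=
      ENNReal.ofReal ((2 - (a - b) * b) / (a + b) ^ 2) • Measure.dirac (-a)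
        + ENNReal.ofReal (4 * (a * b - 1) / (a + b) ^ 2) • Measure.dirac ((b - a) / 2)
        + ENNReal.ofReal ((2 + (a - b) * a) / (a + b) ^ 2) • Measure.dirac b
    IsProbabilityMeasure μ ∧ (∫ x, x ∂μ) = 0 ∧ (∫ x, x ^ 2 ∂μ) = 1 ∧
      μ {x | x ∉ Set.Ioo (-a) b} = ENNReal.ofReal ((4 + (a - b) ^ 2) / (a + b) ^ 2) := by
  intro μ
  have ha : 0 < a := lt_of_lt_of_le hb hba
  have hab : (0:ℝ) < (a + b) ^ 2 := by positivity
  have hne : (a + b) ≠ 0 := by positivity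
  set p1 := (2 - (a - b) * b) / (a + b) ^ 2 with hp1
  set p2 := 4 * (a * b - 1) / (a + b) ^ 2 with hp2
  set p3 := (2 + (a - b) * a) / (a + b) ^ 2 with hp3
  have hp1n : 0 ≤ p1 := by
    apply div_nonneg _ hab.le; nlinarith
  have hp2n : 0 ≤ p2 := by
    apply div_nonneg _ hab.le; nlinarith
  have hp3n : 0 ≤ p3 := by
    apply div_nonneg _ hab.le; nlinarith
  have hsum : p1 + p2 + p3 = 1 := by
    rw [hp1, hp2, hp3]
    field_simp [hp1, hp2, hp3]; ring
  -- integrals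
  have key : ∀ f : ℝ → ℝ, Measurable f →
      (∫ x, f x ∂μ) = p1 * f (-a) + p2 * f ((b - a) / 2) + p3 * f b := by
    intro f hf
    have i1 := (integrable_dirac'' hf (-a)).smul_measure (c := ENNReal.ofReal p1) ENNReal.ofReal_ne_top
    have i2 := (integrable_dirac'' hf ((b - a)/2)).smul_measure (c := ENNReal.ofReal p2) ENNReal.ofReal_ne_top
    have i3 := (integrable_dirac'' hf b).smul_measure (c := ENNReal.ofReal p3) ENNReal.ofReal_ne_top
    rw [show μ = _ + _ + _ from rfl, integral_add_measure (i1.add_measure i2) i3,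
      integral_add_measure i1 i2, integral_smul_measure, integral_smul_measure,
      integral_smul_measure, integral_dirac, integral_dirac, integral_dirac,
      ENNReal.toReal_ofReal hp1n, ENNReal.toReal_ofReal hp2n, ENNReal.toReal_ofReal hp3n]
    simp [smul_eq_mul]
  refine ⟨⟨?_⟩, ?_, ?_, ?_⟩
  · rw [show μ = _ + _ + _ from rfl]
    simp only [Measure.add_apply, Measure.smul_apply, Measure.dirac_apply' _ MeasurableSet.univ,
      Set.mem_univ, Set.indicator_of_mem, Pi.one_apply, smul_eq_mul, mul_one]
    rw [← ENNReal.ofReal_add hp1n hp2n, ← ENNReal.ofReal_add (by linarith) hp3n, hsum]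
    simp
  · rw [key (fun x => x) measurable_id]
    have : p1 * (-a) + p2 * ((b - a)/2) + p3 * b = 0 := by
      field_simp [hp1, hp2, hp3]; ring
    simpa using this
  · rw [key _ (by fun_prop)]
    rw [hp1, hp2, hp3]
    field_simp [hp1, hp2, hp3]; ring
  · have hms : MeasurableSet {x : ℝ | x ∉ Set.Ioo (-a) b} :=
      (measurableSet_Ioo.compl)
    have hmem1 : (-a) ∈ {x : ℝ | x ∉ Set.Ioo (-a) b} := by simp
    have hmem2 : ((b - a)/2) ∉ {x : ℝ | x ∉ Set.Ioo (-a) b} := by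
      simp [Set.mem_Ioo]; constructor <;> linarith
    have hmem3 : b ∈ {x : ℝ | x ∉ Set.Ioo (-a) b} := by simp
    rw [show μ = _ + _ + _ from rfl]
    simp only [Measure.add_apply, Measure.smul_apply, Measure.dirac_apply' _ hms, smul_eq_mul]
    rw [Set.indicator_of_mem hmem1, Set.indicator_of_notMem hmem2, Set.indicator_of_mem hmem3]
    simp only [Pi.one_apply, mul_one, mul_zero, add_zero]
    rw [← ENNReal.ofReal_add hp1n hp3n]
    congr 1
    rw [hp1, hp3]
    field_simp [hp1, hp3]; ring
end

section
/- For fixed b > 0, the function a ↦ P_{a,b} is nonincreasing in a on [b, ∞), where P_{a,b} = 1 if ab ≤ 1, P_{a,b} = (4+(a-b)²)/(a+b)² if (a-b)b/2 ≤ 1 ≤ ab, and P_{a,b} = 1/(1+b²) if (a-b)b/2 ≥ 1. -/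
open MeasureTheory ProbabilityTheory
open scoped ProbabilityTheory

noncomputable def Pab (a b : ℝ) : ℝ :=
  if a * b ≤ 1 then 1
  else if (a - b) * b / 2 ≤ 1 then (4 + (a - b) ^ 2) / (a + b) ^ 2
  else 1 / (1 + b ^ 2)

theorem Pab_antitone (b : ℝ) (hb : 0 < b) :
    ∀ a₁ a₂ : ℝ, b ≤ a₁ → a₁ ≤ a₂ → Pab a₂ b ≤ Pab a₁ b := by
  intro a₁ a₂ h1 h12
  have hb1 : (0:ℝ) < a₁ := lt_of_lt_of_le hb h1
  have hb2 : (0:ℝ) < a₂ := lt_of_lt_of_le hb1 h12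
  have hq1 : (0:ℝ) < (a₁+b)^2 := by positivity
  have hq2 : (0:ℝ) < (a₂+b)^2 := by positivity
  have hbb : (0:ℝ) < 1 + b^2 := by positivity
  unfold Pab
  split_ifs with c1 c2 c3 c4 c5 c6 c7 c8
  · exact le_refl 1
  · exact absurd c1 (by nlinarith)
  · exact absurd c1 (by nlinarith)
  · -- mid ≤ 1, using a₂*b > 1
    rw [div_le_one hq2]; nlinarith
  · -- mid decreasing
    rw [div_le_div_iff₀ hq2 hq1]
    have d : 0 ≤ a₂ - a₁ := by linarith
    have e1 : 0 ≤ 2 - (a₁ - b) * b := by linarith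
    have e2 : 0 ≤ 2 - (a₂ - b) * b := by linarith
    have f : 0 ≤ a₁ - b := sub_nonneg.2 h1
    nlinarith [mul_nonneg d (mul_nonneg hb.le e1), mul_nonneg d (mul_nonneg hb.le e2),
      mul_nonneg d (mul_nonneg (sub_nonneg.2 h1) e2), sq_nonneg (a₂ - a₁)]
  · -- a₁ last region but a₂ mid: impossible
    exact absurd c4 (by nlinarith)
  · rw [div_le_one hbb]; nlinarith
  · -- 1/(1+b²) ≤ mid
    rw [div_le_div_iff₀ hbb hq1]
    nlinarith [sq_nonneg ((a₁ - b) * b - 2)]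
  · exact le_refl _
end
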